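/- For every rooted binary tree T with n ≥ 1 leaves, the sum over all unordered pairs {x,y} of distinct leaves of the number of leaves of the subtree rooted at the lowest common ancestor of x and y equals (n³ − n)/3. Equivalently, the Dasgupta cost of the unit-weight complete graph K_n is exactly (n³ − n)/3 for every binary hierarchical-clustering tree. -/

import Mathlib

/-- A rooted binary tree whose leaves are labeled by elements of `V`. -/
inductive HCT (V : Type) : Type
  | leaf : V → HCT V
  | node : HCT V → HCT V → HCT V

namespace HCT

variable {V : Type}

/-- The list of leaf labels of a tree, left to right. -/
def leaves : HCT V → List V
  | .leaf x => [x]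
  | .node l r => leaves l ++ leaves r

/-- `lcaSize T x y` is the number of leaves of the subtree of `T` rooted at the lowest
common ancestor of the leaves labeled `x` and `y` (when `x ≠ y` are distinct leaves of a
tree with no repeated labels). -/
def lcaSize [DecidableEq V] : HCT V → V → V → ℕ
  | .leaf _, _, _ => 1
  | .node l r, x, y =>
    if x ∈ leaves l ∧ y ∈ leaves l then lcaSize l x y
    else if x ∈ leaves r ∧ y ∈ leaves r then lcaSize r x y
    else (leaves l).length + (leaves r).length

theorem lcaSize_comm [DecidableEq V] (T : HCT V) (x y : V) :
    T.lcaSize x y = T.lcaSize y x := by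
  induction T with
  | leaf _ => rfl
  | node l r ihl ihr =>
      simp only [lcaSize]
      by_cases hxl : x ∈ leaves l <;> by_cases hyl : y ∈ leaves l <;>
        by_cases hxr : x ∈ leaves r <;> by_cases hyr : y ∈ leaves r <;>
        simp [hxl, hyl, hxr, hyr, ihl, ihr, Nat.add_comm]

theorem aux_sum [DecidableEq V] (T : HCT V) (hnd : T.leaves.Nodup) :
    3 * (∑ x ∈ T.leaves.toFinset, ∑ y ∈ T.leaves.toFinset,
        if x = y then 0 else T.lcaSize x y) + 2 * T.leaves.length
      = 2 * T.leaves.length ^ 3 := by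
  induction T with
  | leaf v => simp [leaves]
  | node l r ihl ihr =>
      rw [show (HCT.node l r).leaves = l.leaves ++ r.leaves from rfl,
        List.nodup_append] at hnd
      obtain ⟨hl, hr, hdis⟩ := hnd
      have hdF : Disjoint l.leaves.toFinset r.leaves.toFinset :=
        List.disjoint_toFinset_iff_disjoint.mpr (fun x hx hx' => hdis x hx x hx' rfl)
      set A := l.leaves.toFinset with hA
      set B := r.leaves.toFinset with hB
      have hleaves : (HCT.node l r).leaves = l.leaves ++ r.leaves := rfl
      set a := l.leaves.length with ha
      set b := r.leaves.length with hb
      have hcardA : A.card = a := List.toFinset_card_of_nodup hl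
      have hcardB : B.card = b := List.toFinset_card_of_nodup hr
      have hxA : ∀ x ∈ A, x ∈ l.leaves := fun x hx => List.mem_toFinset.mp hx
      have hxB : ∀ x ∈ B, x ∈ r.leaves := fun x hx => List.mem_toFinset.mp hx
      have hnAB : ∀ x ∈ A, x ∉ r.leaves := by
        intro x hx hx'
        exact hdis x (hxA x hx) x hx' rfl
      have hnBA : ∀ x ∈ B, x ∉ l.leaves := by
        intro x hx hx'
        exact hdis x hx' x (hxB x hx) rfl
      have hSAA : (∑ x ∈ A, ∑ y ∈ A, if x = y then 0 else (HCT.node l r).lcaSize x y)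
          = ∑ x ∈ A, ∑ y ∈ A, if x = y then 0 else l.lcaSize x y := by
        refine Finset.sum_congr rfl fun x hx => Finset.sum_congr rfl fun y hy => ?_
        by_cases h : x = y
        · simp [h]
        · simp [lcaSize, h, hxA x hx, hxA y hy]
      have hSBB : (∑ x ∈ B, ∑ y ∈ B, if x = y then 0 else (HCT.node l r).lcaSize x y)
          = ∑ x ∈ B, ∑ y ∈ B, if x = y then 0 else r.lcaSize x y := by
        refine Finset.sum_congr rfl fun x hx => Finset.sum_congr rfl fun y hy => ?_
        by_cases h : x = y
        · simp [h]
        · simp [lcaSize, h, hnBA x hx, hxB x hx, hxB y hy]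
      have hSAB : (∑ x ∈ A, ∑ y ∈ B, if x = y then 0 else (HCT.node l r).lcaSize x y)
          = a * b * (a + b) := by
        have : ∀ x ∈ A, ∀ y ∈ B, (if x = y then 0 else (HCT.node l r).lcaSize x y) = a + b := by
          intro x hx y hy
          have hxy : x ≠ y := fun h => hnAB x hx (h ▸ hxB y hy)
          simp [lcaSize, hxy, hnBA y hy, hnAB x hx]; rfl
        calc (∑ x ∈ A, ∑ y ∈ B, if x = y then 0 else (HCT.node l r).lcaSize x y)
            = ∑ x ∈ A, ∑ y ∈ B, (a + b) :=
              Finset.sum_congr rfl fun x hx => Finset.sum_congr rfl fun y hy => this x hx y hy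
          _ = a * b * (a + b) := by
              simp [Finset.sum_const, hcardA, hcardB]; ring
      have hSBA : (∑ x ∈ B, ∑ y ∈ A, if x = y then 0 else (HCT.node l r).lcaSize x y)
          = a * b * (a + b) := by
        have : ∀ x ∈ B, ∀ y ∈ A, (if x = y then 0 else (HCT.node l r).lcaSize x y) = a + b := by
          intro x hx y hy
          have hxy : x ≠ y := fun h => hnBA x hx (h ▸ hxA y hy)
          simp [lcaSize, hxy, hnBA x hx, hnAB y hy]; rfl
        calc (∑ x ∈ B, ∑ y ∈ A, if x = y then 0 else (HCT.node l r).lcaSize x y)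
            = ∑ x ∈ B, ∑ y ∈ A, (a + b) :=
              Finset.sum_congr rfl fun x hx => Finset.sum_congr rfl fun y hy => this x hx y hy
          _ = a * b * (a + b) := by
              simp [Finset.sum_const, hcardA, hcardB]; ring
      have htF : (HCT.node l r).leaves.toFinset = A ∪ B := by
        simp [hleaves, List.toFinset_append, hA, hB]
      have hlen : (HCT.node l r).leaves.length = a + b := by
        simp [hleaves]; rfl
      rw [htF, hlen, Finset.sum_union hdF]
      simp only [Finset.sum_union hdF]
      rw [Finset.sum_add_distrib, Finset.sum_add_distrib, hSAA, hSBB, hSAB, hSBA]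
      have hl3 := ihl hl
      have hr3 := ihr hr
      have hcube : 2 * (a + b) ^ 3 = 2 * a ^ 3 + 2 * b ^ 3 + 6 * (a * b * (a + b)) := by ring
      linarith [hl3, hr3, hcube]

end HCT

theorem stmt_18 (n : ℕ) (hn : 1 ≤ n) (T : HCT (Fin n))
    (hnodup : T.leaves.Nodup) (hall : ∀ x : Fin n, x ∈ T.leaves) :
    3 * ∑ p ∈ Finset.univ.filter (fun p : Fin n × Fin n => p.1 < p.2),
        T.lcaSize p.1 p.2 = n ^ 3 - n := by
  have htF : T.leaves.toFinset = (Finset.univ : Finset (Fin n)) := by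
    ext x; simp [hall x]
  have hlen : T.leaves.length = n := by
    rw [← List.toFinset_card_of_nodup hnodup, htF, Finset.card_univ, Fintype.card_fin]
  have key := HCT.aux_sum T hnodup
  rw [htF, hlen] at key
  set S := ∑ p ∈ Finset.univ.filter (fun p : Fin n × Fin n => p.1 < p.2), T.lcaSize p.1 p.2 with hS
  have hswap : (∑ p ∈ Finset.univ.filter (fun p : Fin n × Fin n => p.2 < p.1),
      T.lcaSize p.1 p.2) = S := by
    rw [hS]
    apply Finset.sum_nbij' (i := fun p : Fin n × Fin n => (p.2, p.1))
      (j := fun p : Fin n × Fin n => (p.2, p.1)) <;>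
      simp [HCT.lcaSize_comm]
  have hdouble : (∑ x : Fin n, ∑ y : Fin n, if x = y then 0 else T.lcaSize x y) = 2 * S := by
    rw [← Finset.sum_product']
    have : ∀ p : Fin n × Fin n,
        (if p.1 = p.2 then 0 else T.lcaSize p.1 p.2)
        = (if p.1 < p.2 then T.lcaSize p.1 p.2 else 0)
          + (if p.2 < p.1 then T.lcaSize p.1 p.2 else 0) := by
      intro p
      rcases lt_trichotomy p.1 p.2 with h | h | h
      · rw [if_neg h.ne, if_pos h, if_neg (asymm h), Nat.add_zero]
      · simp [h, lt_irrefl]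
      · rw [if_neg h.ne', if_neg (asymm h), if_pos h, Nat.zero_add]
    rw [Finset.sum_congr rfl fun p _ => this p, Finset.sum_add_distrib,
      ← Finset.sum_filter, ← Finset.sum_filter]
    have huniv : (Finset.univ : Finset (Fin n)) ×ˢ (Finset.univ : Finset (Fin n))
        = (Finset.univ : Finset (Fin n × Fin n)) := Finset.univ_product_univ
    rw [huniv]
    rw [hswap, ← hS]
    ring
  rw [hdouble] at key
  have hle : n ≤ n ^ 3 := Nat.le_self_pow (by norm_num) n
  -- key : 3 * (2 * S) + 2 * n = 2 * n ^ 3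
  generalize hm : n ^ 3 = m at key hle ⊢
  omega
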